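/- Russo's formula for Poisson loop ensembles: Let β be an intensity function on loops with Σ_{ℓ ∩ B(n) ≠ ∅} β(ℓ)μ(ℓ) < ∞, and let 𝓛_β be the Poisson point process of loops with intensity β(ℓ)μ(dℓ). Then for each fixed loop ℓ₀, the partial derivative of ℙ[0 ↔ ∂B(n) in 𝓛_β] with respect to β(ℓ₀) equals μ(ℓ₀)·ℙ[𝒞_β(0) is joined to 𝒞_β(∂B(n)) by ℓ₀, and 𝒞_β(0) ∩ ∂B(n) = ∅], where 𝒞_β(A) is the union of open clusters of vertices of A. -/

import Mathlib

open MeasureTheory Set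

/-- A based loop on `ℤ^d`: a cyclic sequence of length `len ≥ 2` of vertices of `ℤ^d`
(indexed by `ZMod len`) such that consecutive vertices (cyclically) differ by a unit step
(nearest-neighbor steps of simple random walk); in particular consecutive vertices differ. -/
structure BasedLoop (d : ℕ) where
  len : ℕ
  two_le_len : 2 ≤ len
  path : ZMod len → Fin d → ℤ
  step : ∀ i : ZMod len, (∑ k : Fin d, |path (i + 1) k - path i k|) = 1

/-- Two based loops are equivalent if they coincide after a cyclic rotation. -/
def BasedLoop.Equiv {d : ℕ} (a b : BasedLoop d) : Prop :=
  a.len = b.len ∧ ∃ r : ℤ, ∀ i : ℤ, b.path (i : ZMod b.len) = a.path ((i + r : ℤ) : ZMod a.len)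

/-- A (discrete, non-trivial) loop on `ℤ^d`: an equivalence class of based loops under
cyclic rotation. -/
def Loop (d : ℕ) := Quot (@BasedLoop.Equiv d)

/-- The length `|ℓ|` of a loop. -/
def Loop.len {d : ℕ} : Loop d → ℕ :=
  Quot.lift BasedLoop.len (fun _ _ h => h.1)

/-- The set of vertices covered by a loop. -/
def Loop.vertexSet {d : ℕ} (L : Loop d) : Set (Fin d → ℤ) :=
  {x | ∃ ℓ : BasedLoop d, Quot.mk _ ℓ = L ∧ x ∈ Set.range ℓ.path}

/-- The SRW loop measure of a single loop: the number of based representatives times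
`(1/n)·(1/(2d))^n` where `n` is the length (push-forward of the based loop weight
`(1/n)·Q^{x₁}_{x₂}⋯Q^{xₙ}_{x₁}`, `Q` the SRW transition matrix). -/
noncomputable def Loop.mu {d : ℕ} (L : Loop d) : ℝ :=
  (Set.ncard {ℓ : BasedLoop d | Quot.mk _ ℓ = L} : ℝ) * (1 / (L.len : ℝ)) *
    (1 / (2 * (d : ℝ))) ^ L.len

/-- A loop traverses the (unoriented) edge `{x, y}`. -/
def Loop.Traverses {d : ℕ} (L : Loop d) (x y : Fin d → ℤ) : Prop :=
  ∃ ℓ : BasedLoop d, Quot.mk _ ℓ = L ∧ ∃ i : ZMod ℓ.len,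
    (ℓ.path i = x ∧ ℓ.path (i + 1) = y) ∨ (ℓ.path i = y ∧ ℓ.path (i + 1) = x)

/-- The box `B(n) = {-n, …, n}^d` in `ℤ^d`. -/
def linfBall (d : ℕ) (n : ℕ) : Set (Fin d → ℤ) :=
  {x | ∀ k, |x k| ≤ (n : ℤ)}

/-- The boundary `∂B(n) = {x : |x|_∞ = n}` of the box `B(n)`. -/
def linfSphere (d : ℕ) (n : ℕ) : Set (Fin d → ℤ) :=
  {x | (∀ k, |x k| ≤ (n : ℤ)) ∧ ∃ k, |x k| = (n : ℤ)}

/-- Given a collection `S` of loops, two vertices are adjacent if some loop of `S`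
traverses the edge between them. -/
def loopAdj {d : ℕ} (S : Set (Loop d)) (x y : Fin d → ℤ) : Prop :=
  ∃ L ∈ S, L.Traverses x y

/-- Connection by open edges induced by the collection of loops `S`. -/
def loopConn {d : ℕ} (S : Set (Loop d)) (x y : Fin d → ℤ) : Prop :=
  Relation.ReflTransGen (loopAdj S) x y

/-- The open cluster of the vertex `x` for the collection of loops `S`. -/
def loopCluster {d : ℕ} (S : Set (Loop d)) (x : Fin d → ℤ) : Set (Fin d → ℤ) :=
  {y | loopConn S x y}

/-- `N` is a Poisson point process of loops with intensity function `ι` (the multiplicity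
`N L` of each loop `L` is Poisson of parameter `ι L`, independently over loops). -/
def IsPoissonLoopProcess {d : ℕ} {Ω : Type*} [MeasurableSpace Ω] (ℙ : Measure Ω)
    (N : Loop d → Ω → ℕ) (ι : Loop d → ℝ) : Prop :=
  (∀ L, Measurable (N L)) ∧
  ProbabilityTheory.iIndepFun N ℙ ∧
  ∀ (L : Loop d) (k : ℕ),
    ℙ {ω | N L ω = k} = ENNReal.ofReal (Real.exp (-ι L) * (ι L) ^ k / (Nat.factorial k))

/-- The (multi-)collection of loops present in the configuration `ω`, as a set. -/
def loopsOf {d : ℕ} {Ω : Type*} (N : Loop d → Ω → ℕ) (ω : Ω) : Set (Loop d) :=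
  {L | 0 < N L ω}

open Classical


section Chunk1

open Relation

variable {d : ℕ}

instance : Countable (BasedLoop d) := by
  have hinj : Function.Injective
      (fun ℓ : BasedLoop d => (ℓ.len, List.ofFn (fun k : Fin ℓ.len => ℓ.path (k : ℕ)))) := by
    rintro ⟨n, hn, p, hp⟩ ⟨m, hm, q, hq⟩ h
    simp only [Prod.mk.injEq] at h
    obtain ⟨rfl, h2⟩ := h
    have hpq : (fun k : Fin n => p (k : ℕ)) = fun k : Fin n => q (k : ℕ) :=
      List.ofFn_injective h2
    have : p = q := by
      haveI : NeZero n := ⟨by omega⟩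
      funext i
      have hv : ((i.val : ℕ) : ZMod n) = i := ZMod.natCast_zmod_val i
      have := congrFun hpq ⟨i.val, ZMod.val_lt i⟩
      simpa [hv] using this
    subst this
    rfl
  exact hinj.countable

instance : Countable (Loop d) := by
  have : Function.Surjective (Quot.mk (@BasedLoop.Equiv d)) := Quot.exists_rep
  exact this.countable

lemma BasedLoop.neZero_len (ℓ : BasedLoop d) : NeZero ℓ.len := ⟨by have := ℓ.two_le_len; omega⟩

lemma BasedLoop.range_eq_of_equiv {a b : BasedLoop d} (h : BasedLoop.Equiv a b) :
    Set.range a.path = Set.range b.path := by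
  obtain ⟨hlen, r, hr⟩ := h
  haveI := a.neZero_len; haveI := b.neZero_len
  ext x
  constructor
  · rintro ⟨j, rfl⟩
    refine ⟨(((j.val : ℤ) - r : ℤ) : ZMod b.len), ?_⟩
    rw [hr ((j.val : ℤ) - r)]
    push_cast
    simp [ZMod.natCast_zmod_val]
  · rintro ⟨j, rfl⟩
    rw [show j = (((j.val : ℤ)) : ZMod b.len) by push_cast; simp [ZMod.natCast_zmod_val]]
    rw [hr (j.val : ℤ)]
    exact ⟨_, rfl⟩

lemma BasedLoop.range_eq_of_mk_eq {a b : BasedLoop d}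
    (h : Quot.mk BasedLoop.Equiv a = Quot.mk BasedLoop.Equiv b) :
    Set.range a.path = Set.range b.path := by
  have h' := Quot.eq.mp h
  clear h
  induction h' with
  | rel _ _ hr => exact BasedLoop.range_eq_of_equiv hr
  | refl => rfl
  | symm _ _ _ ih => exact ih.symm
  | trans _ _ _ _ _ ih1 ih2 => exact ih1.trans ih2

lemma Loop.vertexSet_eq_range {L : Loop d} {ℓ : BasedLoop d} (h : Quot.mk _ ℓ = L) :
    L.vertexSet = Set.range ℓ.path := by
  ext x
  constructor
  · rintro ⟨ℓ', hℓ', hx⟩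
    rw [← BasedLoop.range_eq_of_mk_eq (hℓ'.trans h.symm)]
    exact hx
  · intro hx
    exact ⟨ℓ, h, hx⟩

end Chunk1
section Chunk2
open Relation
variable {d : ℕ}

lemma Loop.Traverses.mem_left {L : Loop d} {x y : Fin d → ℤ} (h : L.Traverses x y) :
    x ∈ L.vertexSet := by
  obtain ⟨ℓ, hℓ, i, h | h⟩ := h
  · exact ⟨ℓ, hℓ, i, h.1⟩
  · exact ⟨ℓ, hℓ, i + 1, h.2⟩

lemma Loop.Traverses.symm {L : Loop d} {x y : Fin d → ℤ} (h : L.Traverses x y) :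
    L.Traverses y x := by
  obtain ⟨ℓ, hℓ, i, h | h⟩ := h
  · exact ⟨ℓ, hℓ, i, Or.inr h⟩
  · exact ⟨ℓ, hℓ, i, Or.inl h⟩

lemma loopAdj_symm {S : Set (Loop d)} {x y : Fin d → ℤ} (h : loopAdj S x y) :
    loopAdj S y x := by
  obtain ⟨L, hL, ht⟩ := h
  exact ⟨L, hL, ht.symm⟩

lemma loopConn_symm {S : Set (Loop d)} {x y : Fin d → ℤ} (h : loopConn S x y) :
    loopConn S y x :=
  (@ReflTransGen.stdSymm _ (loopAdj S) ⟨fun _ _ h => loopAdj_symm h⟩).symm _ _ h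

lemma loopConn_trans {S : Set (Loop d)} {x y z : Fin d → ℤ} (h1 : loopConn S x y)
    (h2 : loopConn S y z) : loopConn S x z := ReflTransGen.trans h1 h2

lemma loopConn_mono {S S' : Set (Loop d)} (hss : S ⊆ S') {x y : Fin d → ℤ}
    (h : loopConn S x y) : loopConn S' x y :=
  ReflTransGen.mono (r := loopAdj S) (p := loopAdj S') (fun _ _ ⟨L, hL, ht⟩ => ⟨L, hss hL, ht⟩) _ _ h

lemma loopConn_of_mem_vertexSet {S : Set (Loop d)} {L : Loop d} (hL : L ∈ S)
    {x y : Fin d → ℤ} (hx : x ∈ L.vertexSet) (hy : y ∈ L.vertexSet) : loopConn S x y := by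
  obtain ⟨ℓ, hℓ⟩ := Quot.exists_rep L
  rw [Loop.vertexSet_eq_range hℓ] at hx hy
  · obtain ⟨i, rfl⟩ := hx
    obtain ⟨j, rfl⟩ := hy
    haveI := ℓ.neZero_len
    have key : ∀ m : ℕ, loopConn S (ℓ.path i) (ℓ.path (i + (m : ZMod ℓ.len))) := by
      intro m
      induction m with
      | zero => simp only [Nat.cast_zero, add_zero]; exact ReflTransGen.refl
      | succ k ih =>
        refine ReflTransGen.tail ih ⟨L, hL, ℓ, hℓ, i + (k : ZMod ℓ.len), Or.inl ⟨rfl, ?_⟩⟩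
        push_cast
        ring_nf
    have := key (j - i).val
    rwa [ZMod.natCast_zmod_val, add_sub_cancel] at this

lemma loopConn_insert_elim {S : Set (Loop d)} {ℓ₀ : Loop d} {a b : Fin d → ℤ}
    (h : loopConn (insert ℓ₀ S) a b) :
    loopConn S a b ∨
      ((∃ x ∈ ℓ₀.vertexSet, loopConn S a x) ∧ (∃ y ∈ ℓ₀.vertexSet, loopConn S y b)) := by
  induction h with
  | refl => exact Or.inl ReflTransGen.refl
  | tail hac hcb ih =>
    rename_i c b'
    obtain ⟨L, hLmem, ht⟩ := hcb
    rcases Set.mem_insert_iff.mp hLmem with rfl | hLS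
    · rcases ih with h1 | ⟨⟨x, hxv, hax⟩, ⟨y, hyv, hyc⟩⟩
      · exact Or.inr ⟨⟨c, ht.mem_left, h1⟩, ⟨b', ht.symm.mem_left, ReflTransGen.refl⟩⟩
      · exact Or.inr ⟨⟨x, hxv, hax⟩, ⟨b', ht.symm.mem_left, ReflTransGen.refl⟩⟩
    · rcases ih with h1 | ⟨⟨x, hxv, hax⟩, ⟨y, hyv, hyc⟩⟩
      · exact Or.inl (ReflTransGen.tail h1 ⟨L, hLS, ht⟩)
      · exact Or.inr ⟨⟨x, hxv, hax⟩, ⟨y, hyv, ReflTransGen.tail hyc ⟨L, hLS, ht⟩⟩⟩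

end Chunk2
section Chunk3
open Relation MeasureTheory

lemma measurableSet_chain {Ω V : Type*} {m : MeasurableSpace Ω}
    (R : Ω → V → V → Prop) (hR : ∀ x y, MeasurableSet[m] {ω | R ω x y}) :
    ∀ (l : List V) (a : V), MeasurableSet[m] {ω | List.Chain (R ω) a l} := by
  intro l
  induction l with
  | nil => intro a; simp [List.Chain]
  | cons c l ih =>
    intro a
    have : {ω | List.Chain (R ω) a (c :: l)} = {ω | R ω a c} ∩ {ω | List.Chain (R ω) c l} := by
      ext ω; simp [List.Chain]
    rw [this]
    exact (hR a c).inter (ih c)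

lemma measurableSet_reflTransGen {Ω V : Type*} [Countable V] {m : MeasurableSpace Ω}
    (R : Ω → V → V → Prop) (hR : ∀ x y, MeasurableSet[m] {ω | R ω x y}) (a b : V) :
    MeasurableSet[m] {ω | Relation.ReflTransGen (R ω) a b} := by
  have : {ω | Relation.ReflTransGen (R ω) a b} =
      ⋃ (l : List V) (_ : List.getLast (a :: l) (List.cons_ne_nil _ _) = b),
        {ω | List.Chain (R ω) a l} := by
    ext ω
    simp only [Set.mem_setOf_eq, Set.mem_iUnion]
    constructor
    · intro h
      obtain ⟨l, h1, h2⟩ := List.exists_isChain_cons_of_relationReflTransGen h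
      exact ⟨l, h2, h1⟩
    · rintro ⟨l, h2, h1⟩
      exact List.relationReflTransGen_of_exists_isChain_cons l h1 h2
  rw [this]
  exact MeasurableSet.iUnion fun l => MeasurableSet.iUnion fun _ => measurableSet_chain R hR l a

instance countableZV (d : ℕ) : Countable (Fin d → ℤ) := inferInstance

end Chunk3
section Chunk4
open Relation MeasureTheory

variable {d : ℕ} {Ω : Type*}

/-- The loops other than `ℓ₀` present in configuration `ω`. -/
def RLSm (N : Loop d → Ω → ℕ) (ℓ₀ : Loop d) (ω : Ω) : Set (Loop d) :=
  {L | L ≠ ℓ₀ ∧ 0 < N L ω}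

/-- The σ-algebra generated by the coordinates other than `ℓ₀`. -/
def RLrest (N : Loop d → Ω → ℕ) (ℓ₀ : Loop d) : MeasurableSpace Ω :=
  ⨆ (L : Loop d) (_ : L ≠ ℓ₀), MeasurableSpace.comap (N L) inferInstance

lemma RLrest_le {m : MeasurableSpace Ω} (N : Loop d → Ω → ℕ) (ℓ₀ : Loop d)
    (hN : ∀ L, Measurable (N L)) : RLrest N ℓ₀ ≤ m := by
  refine iSup_le fun L => iSup_le fun _ => ?_
  exact MeasurableSpace.comap_le_iff_le_map.mpr fun s hs => (hN L) hs

lemma RLmeas_pos (N : Loop d → Ω → ℕ) {ℓ₀ L : Loop d} (hL : L ≠ ℓ₀) :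
    MeasurableSet[RLrest N ℓ₀] {ω | 0 < N L ω} := by
  have h1 : MeasurableSet[MeasurableSpace.comap (N L) inferInstance] {ω | 0 < N L ω} :=
    ⟨Set.Ioi 0, measurableSet_Ioi, rfl⟩
  have hle : MeasurableSpace.comap (N L) inferInstance ≤ RLrest N ℓ₀ :=
    le_iSup_of_le L (le_iSup_of_le hL le_rfl)
  exact hle _ h1

lemma RLmeas_adjm (N : Loop d → Ω → ℕ) (ℓ₀ : Loop d) (x y : Fin d → ℤ) :
    MeasurableSet[RLrest N ℓ₀] {ω | loopAdj (RLSm N ℓ₀ ω) x y} := by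
  have : {ω | loopAdj (RLSm N ℓ₀ ω) x y} =
      ⋃ (L : Loop d) (_ : L ≠ ℓ₀ ∧ L.Traverses x y), {ω | 0 < N L ω} := by
    ext ω
    simp only [Set.mem_setOf_eq, Set.mem_iUnion, loopAdj, RLSm]
    constructor
    · rintro ⟨L, ⟨h1, h2⟩, h3⟩; exact ⟨L, ⟨h1, h3⟩, h2⟩
    · rintro ⟨L, ⟨h1, h3⟩, h2⟩; exact ⟨L, ⟨h1, h2⟩, h3⟩
  rw [this]
  exact MeasurableSet.iUnion fun L => MeasurableSet.iUnion fun hL => RLmeas_pos N hL.1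

lemma RLmeas_adjp (N : Loop d → Ω → ℕ) (ℓ₀ : Loop d) (x y : Fin d → ℤ) :
    MeasurableSet[RLrest N ℓ₀] {ω | loopAdj (insert ℓ₀ (RLSm N ℓ₀ ω)) x y} := by
  have : {ω | loopAdj (insert ℓ₀ (RLSm N ℓ₀ ω)) x y} =
      {ω | ℓ₀.Traverses x y} ∪ {ω | loopAdj (RLSm N ℓ₀ ω) x y} := by
    ext ω
    simp only [Set.mem_setOf_eq, Set.mem_union, loopAdj, Set.mem_insert_iff]
    constructor
    · rintro ⟨L, rfl | h1, h2⟩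
      · exact Or.inl h2
      · exact Or.inr ⟨L, h1, h2⟩
    · rintro (h | ⟨L, h1, h2⟩)
      · exact ⟨ℓ₀, Or.inl rfl, h⟩
      · exact ⟨L, Or.inr h1, h2⟩
  rw [this]
  refine MeasurableSet.union ?_ (RLmeas_adjm N ℓ₀ x y)
  by_cases h : ℓ₀.Traverses x y
  · simpa [h] using (MeasurableSet.univ : MeasurableSet[RLrest N ℓ₀] Set.univ)
  · simpa [h] using (MeasurableSet.empty : MeasurableSet[RLrest N ℓ₀] ∅)

lemma RLnonempty_iff (S : Set (Loop d)) (n : ℕ) :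
    (loopCluster S 0 ∩ linfSphere d n).Nonempty ↔ ∃ z ∈ linfSphere d n, loopConn S 0 z := by
  constructor
  · rintro ⟨z, hz1, hz2⟩; exact ⟨z, hz2, hz1⟩
  · rintro ⟨z, hz2, hz1⟩; exact ⟨z, hz1, hz2⟩

lemma RLmeas_cluster_event (N : Loop d → Ω → ℕ) (ℓ₀ : Loop d) (n : ℕ)
    (R : Ω → Set (Loop d))
    (hR : ∀ x y : Fin d → ℤ, MeasurableSet[RLrest N ℓ₀] {ω | loopAdj (R ω) x y}) :
    MeasurableSet[RLrest N ℓ₀] {ω | (loopCluster (R ω) 0 ∩ linfSphere d n).Nonempty} := by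
  have : {ω | (loopCluster (R ω) 0 ∩ linfSphere d n).Nonempty} =
      ⋃ (z : Fin d → ℤ) (_ : z ∈ linfSphere d n),
        {ω | Relation.ReflTransGen (fun a b => loopAdj (R ω) a b) 0 z} := by
    ext ω
    simp only [Set.mem_setOf_eq, Set.mem_iUnion, RLnonempty_iff]
    constructor
    · rintro ⟨z, h1, h2⟩; exact ⟨z, h1, h2⟩
    · rintro ⟨z, h1, h2⟩; exact ⟨z, h1, h2⟩
  rw [this]
  exact MeasurableSet.iUnion fun z => MeasurableSet.iUnion fun _ =>
    measurableSet_reflTransGen (fun ω a b => loopAdj (R ω) a b) hR 0 z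

end Chunk4
section Chunk5
open MeasureTheory ProbabilityTheory

lemma RLpoisson_singleton (r : NNReal) (k : ℕ) :
    poissonMeasure r {k} = ENNReal.ofReal (Real.exp (-(r : ℝ)) * (r : ℝ) ^ k / (Nat.factorial k)) := by
  rw [poissonMeasure_singleton]

lemma RLprod_process {d : ℕ} {Ω : Type} {mΩ : MeasurableSpace Ω} (Pm : Measure Ω)
    [IsProbabilityMeasure Pm] (N : Loop d → Ω → ℕ) (ι : Loop d → ℝ)
    (hproc : IsPoissonLoopProcess Pm N ι) (ℓ₀ : Loop d) (t : ℝ) (ht : 0 ≤ t) :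
    IsPoissonLoopProcess (Pm.prod (poissonMeasure t.toNNReal))
      (fun L p => if L = ℓ₀ then p.2 else N L p.1) (Function.update ι ℓ₀ t) := by
  obtain ⟨hmeas, hindep, hmarg⟩ := hproc
  set π := poissonMeasure t.toNNReal with hπ
  haveI : IsProbabilityMeasure π := inferInstance
  set N' : Loop d → Ω × ℕ → ℕ := fun L p => if L = ℓ₀ then p.2 else N L p.1 with hN'
  have hN'm : ∀ L, Measurable (N' L) := by
    intro L
    by_cases h : L = ℓ₀
    · subst h; simpa [hN'] using measurable_snd
    · show Measurable fun p : Ω × ℕ => if L = ℓ₀ then p.2 else N L p.1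
      simp only [h, if_false]; exact (hmeas L).comp measurable_fst
  have hrect : ∀ (L : Loop d) (A : Set ℕ), L ≠ ℓ₀ → N' L ⁻¹' A = (N L ⁻¹' A) ×ˢ Set.univ := by
    intro L A hL
    ext ⟨ω, k⟩
    simp [hN', hL]
  have hrect0 : ∀ (A : Set ℕ), N' ℓ₀ ⁻¹' A = (Set.univ : Set Ω) ×ˢ A := by
    intro A
    ext ⟨ω, k⟩
    simp [hN']
  have hmeasure_rect : ∀ (L : Loop d) (A : Set ℕ), L ≠ ℓ₀ →
      (Pm.prod π) (N' L ⁻¹' A) = Pm (N L ⁻¹' A) := by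
    intro L A hL
    rw [hrect L A hL, Measure.prod_prod, measure_univ, mul_one]
  have hmeasure_rect0 : ∀ (A : Set ℕ), (Pm.prod π) (N' ℓ₀ ⁻¹' A) = π A := by
    intro A
    rw [hrect0 A, Measure.prod_prod, measure_univ, one_mul]
  refine ⟨hN'm, ?_, ?_⟩
  · rw [ProbabilityTheory.iIndepFun_iff_measure_inter_preimage_eq_mul]
    intro S sets hsets
    by_cases hmem : ℓ₀ ∈ S
    · have hinter : (⋂ L ∈ S, N' L ⁻¹' sets L) =
          (⋂ L ∈ S.erase ℓ₀, N L ⁻¹' sets L) ×ˢ sets ℓ₀ := by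
        ext ⟨ω, k⟩
        simp only [Set.mem_iInter, Set.mem_preimage, Set.mem_prod, hN', Finset.mem_erase]
        constructor
        · intro h
          refine ⟨fun L hL => ?_, ?_⟩
          · have := h L hL.2
            simpa [hL.1] using this
          · have := h ℓ₀ hmem
            simpa using this
        · rintro ⟨h1, h2⟩ L hL
          by_cases hLe : L = ℓ₀
          · subst hLe; simpa using h2
          · exact by simpa [hLe] using h1 L ⟨hLe, hL⟩
      rw [hinter, Measure.prod_prod]
      have horig : Pm (⋂ L ∈ S.erase ℓ₀, N L ⁻¹' sets L) =
          ∏ L ∈ S.erase ℓ₀, Pm (N L ⁻¹' sets L) :=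
        hindep.measure_inter_preimage_eq_mul _ (fun L hL => hsets L (Finset.mem_of_mem_erase hL))
      rw [horig]
      rw [← Finset.mul_prod_erase S _ hmem]
      rw [hmeasure_rect0]
      rw [Finset.prod_congr rfl (fun L hL => hmeasure_rect L (sets L) (Finset.mem_erase.mp hL).1)]
      ring
    · have hinter : (⋂ L ∈ S, N' L ⁻¹' sets L) =
          (⋂ L ∈ S, N L ⁻¹' sets L) ×ˢ (Set.univ : Set ℕ) := by
        ext ⟨ω, k⟩
        simp only [Set.mem_iInter, Set.mem_preimage, Set.mem_prod, hN', Set.mem_univ, and_true]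
        constructor
        · intro h L hL
          have := h L hL
          have hLe : L ≠ ℓ₀ := fun he => hmem (he ▸ hL)
          simpa [hLe] using this
        · intro h L hL
          have hLe : L ≠ ℓ₀ := fun he => hmem (he ▸ hL)
          simpa [hLe] using h L hL
      rw [hinter, Measure.prod_prod, measure_univ, mul_one]
      have horig : Pm (⋂ L ∈ S, N L ⁻¹' sets L) = ∏ L ∈ S, Pm (N L ⁻¹' sets L) :=
        hindep.measure_inter_preimage_eq_mul _ (fun L hL => hsets L hL)
      rw [horig]
      exact Finset.prod_congr rfl fun L hL =>
        (hmeasure_rect L (sets L) (fun he => hmem (he ▸ hL))).symm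
  · intro L k
    by_cases hL : L = ℓ₀
    · subst hL
      have : {p : Ω × ℕ | N' L p = k} = N' L ⁻¹' {k} := rfl
      rw [this, hmeasure_rect0, hπ, RLpoisson_singleton, Real.coe_toNNReal t ht,
        Function.update_self]
    · have : {p : Ω × ℕ | N' L p = k} = N' L ⁻¹' {k} := rfl
      rw [this, hmeasure_rect L {k} hL]
      have := hmarg L k
      rw [show (N L ⁻¹' {k}) = {ω | N L ω = k} from rfl, this, Function.update_of_ne hL]
end Chunk5
/-- **Russo's formula for Poisson loop ensembles.**
Let `β` be a nonnegative intensity function on loops with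
`Σ_{ℓ ∩ B(n) ≠ ∅} β(ℓ)μ(ℓ) < ∞`, and let `P` be the function assigning to an intensity
function the probability that `0` is connected to `∂B(n)` in the associated Poisson loop
soup `𝓛_β` (of intensity `β(ℓ)μ(dℓ)`). Then for each fixed loop `ℓ₀` (with `β(ℓ₀) > 0`),
the partial derivative of `P` with respect to the coordinate `β(ℓ₀)` equals
`μ(ℓ₀)·ℙ[𝒞_β(0) ↔^{ℓ₀} 𝒞_β(∂B(n)), 𝒞_β(0) ∩ ∂B(n) = ∅]`. -/
theorem russo_formula_loop_soup (d n : ℕ) (hn : 1 ≤ n)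
    (β : Loop d → ℝ) (hβ : ∀ L, 0 ≤ β L)
    (hfin : Summable (fun L : {L : Loop d // (L.vertexSet ∩ linfBall d n).Nonempty} =>
      β L.1 * Loop.mu L.1))
    (P : (Loop d → ℝ) → ℝ)
    (hP : ∀ (γ : Loop d → ℝ), (∀ L, 0 ≤ γ L) →
      ∀ (Ω : Type) (_ : MeasurableSpace Ω) (ℙ : Measure Ω) (_ : IsProbabilityMeasure ℙ)
        (N : Loop d → Ω → ℕ), IsPoissonLoopProcess ℙ N (fun L => γ L * L.mu) →
      P γ = (ℙ {ω | (loopCluster (loopsOf N ω) 0 ∩ linfSphere d n).Nonempty}).toReal)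
    (ℓ₀ : Loop d) (hℓ₀ : 0 < β ℓ₀) :
    ∀ (Ω : Type) (_ : MeasurableSpace Ω) (ℙ : Measure Ω) (_ : IsProbabilityMeasure ℙ)
      (N : Loop d → Ω → ℕ), IsPoissonLoopProcess ℙ N (fun L => β L * L.mu) →
    HasDerivAt (fun t : ℝ => P (Function.update β ℓ₀ t))
      (Loop.mu ℓ₀ *
        (ℙ {ω | (ℓ₀.vertexSet ∩ loopCluster (loopsOf N ω) 0).Nonempty ∧
              (ℓ₀.vertexSet ∩ ⋃ z ∈ linfSphere d n, loopCluster (loopsOf N ω) z).Nonempty ∧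
              loopCluster (loopsOf N ω) 0 ∩ linfSphere d n = ∅}).toReal)
      (β ℓ₀) := by
  intro Ω mΩ Pm hprob N hproc
  haveI := hprob
  obtain ⟨hNmeas, hNindep, hNmarg⟩ := hproc
  set μ0 := Loop.mu ℓ₀ with hμ0def
  have hμ0nn : 0 ≤ μ0 := by
    rw [hμ0def, Loop.mu]
    positivity
  set Sm := RLSm N ℓ₀ with hSmdef
  set Ap := {ω | (loopCluster (insert ℓ₀ (Sm ω)) 0 ∩ linfSphere d n).Nonempty} with hApdef
  set Am := {ω | (loopCluster (Sm ω) 0 ∩ linfSphere d n).Nonempty} with hAmdef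
  have hApm' : MeasurableSet[RLrest N ℓ₀] Ap :=
    RLmeas_cluster_event N ℓ₀ n (fun ω => insert ℓ₀ (Sm ω)) (RLmeas_adjp N ℓ₀)
  have hAmm' : MeasurableSet[RLrest N ℓ₀] Am :=
    RLmeas_cluster_event N ℓ₀ n (fun ω => Sm ω) (RLmeas_adjm N ℓ₀)
  have hrest_le : RLrest N ℓ₀ ≤ mΩ := RLrest_le N ℓ₀ hNmeas
  have hApm : MeasurableSet Ap := hrest_le _ hApm'
  have hAmm : MeasurableSet Am := hrest_le _ hAmm'
  have hAmAp : Am ⊆ Ap := by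
    rintro ω ⟨z, hz1, hz2⟩
    exact ⟨z, loopConn_mono (Set.subset_insert _ _) hz1, hz2⟩
  set a := (Pm Ap).toReal with hadef
  set b := (Pm Am).toReal with hbdef
  -- step 1 : the combinatorial identity
  have hSeq : ∀ ω, N ℓ₀ ω = 0 → loopsOf N ω = Sm ω := by
    intro ω h0
    ext L
    simp only [loopsOf, Set.mem_setOf_eq, hSmdef, RLSm]
    constructor
    · intro hL
      refine ⟨fun he => ?_, hL⟩
      rw [he, h0] at hL
      exact lt_irrefl 0 hL
    · exact fun h => h.2
  have hTeq : {ω | (ℓ₀.vertexSet ∩ loopCluster (loopsOf N ω) 0).Nonempty ∧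
        (ℓ₀.vertexSet ∩ ⋃ z ∈ linfSphere d n, loopCluster (loopsOf N ω) z).Nonempty ∧
        loopCluster (loopsOf N ω) 0 ∩ linfSphere d n = ∅} =
      {ω | N ℓ₀ ω = 0} ∩ (Ap \ Am) := by
    ext ω
    simp only [Set.mem_setOf_eq, Set.mem_inter_iff, Set.mem_diff]
    constructor
    · rintro ⟨⟨x, hxv, hx0⟩, ⟨y, hyv, hy⟩, hempty⟩
      obtain ⟨z, hzsph, hzy⟩ : ∃ z ∈ linfSphere d n, loopConn (loopsOf N ω) z y := by
        simp only [Set.mem_iUnion] at hy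
        obtain ⟨z, hz, hzy⟩ := hy
        exact ⟨z, hz, hzy⟩
      have h0 : N ℓ₀ ω = 0 := by
        by_contra hne
        have hmem : ℓ₀ ∈ loopsOf N ω := Nat.pos_of_ne_zero hne
        have hconn : loopConn (loopsOf N ω) 0 z :=
          loopConn_trans hx0 (loopConn_trans (loopConn_of_mem_vertexSet hmem hxv hyv)
            (loopConn_symm hzy))
        exact absurd hempty (by
          intro he
          have : z ∈ loopCluster (loopsOf N ω) 0 ∩ linfSphere d n := ⟨hconn, hzsph⟩
          rw [he] at this
          exact this)
      have hS : loopsOf N ω = Sm ω := hSeq ω h0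
      rw [hS] at hx0 hzy hempty
      refine ⟨h0, ⟨z, ?_, hzsph⟩, ?_⟩
      · exact loopConn_trans (loopConn_mono (Set.subset_insert _ _) hx0)
          (loopConn_trans
            (loopConn_of_mem_vertexSet (Set.mem_insert _ _) hxv hyv)
            (loopConn_mono (Set.subset_insert _ _) (loopConn_symm hzy)))
      · intro hAmmem
        obtain ⟨w, hw1, hw2⟩ := hAmmem
        have : w ∈ loopCluster (Sm ω) 0 ∩ linfSphere d n := ⟨hw1, hw2⟩
        rw [hempty] at this
        exact this
    · rintro ⟨h0, ⟨z, hz1, hz2⟩, hnAm⟩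
      have hS : loopsOf N ω = Sm ω := hSeq ω h0
      have hempty : loopCluster (Sm ω) 0 ∩ linfSphere d n = ∅ := by
        rw [Set.eq_empty_iff_forall_notMem]
        rintro w ⟨hw1, hw2⟩
        exact hnAm ⟨w, hw1, hw2⟩
      rcases loopConn_insert_elim hz1 with hconn | ⟨⟨x, hxv, hax⟩, ⟨y, hyv, hyb⟩⟩
      · exact (hnAm ⟨z, hconn, hz2⟩).elim
      · refine ⟨⟨x, hxv, ?_⟩, ⟨y, hyv, ?_⟩, ?_⟩
        · rw [hS]; exact hax
        · rw [hS]
          simp only [Set.mem_iUnion]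
          exact ⟨z, hz2, loopConn_symm hyb⟩
        · rw [hS]; exact hempty
  -- step 2 : independence
  have hcomaple : ∀ L : Loop d, MeasurableSpace.comap (N L) inferInstance ≤ mΩ :=
    fun L => MeasurableSpace.comap_le_iff_le_map.mpr fun s hs => (hNmeas L) hs
  have hindep2 : ProbabilityTheory.Indep (MeasurableSpace.comap (N ℓ₀) inferInstance)
      (RLrest N ℓ₀) Pm := by
    have h := ProbabilityTheory.indep_iSup_of_disjoint hcomaple hNindep.iIndep
      (S := {ℓ₀}) (T := {ℓ₀}ᶜ) disjoint_compl_right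
    have h1 : (⨆ L ∈ ({ℓ₀} : Set (Loop d)), MeasurableSpace.comap (N L) inferInstance) =
        MeasurableSpace.comap (N ℓ₀) inferInstance := by simp
    have h2 : (⨆ L ∈ ({ℓ₀}ᶜ : Set (Loop d)), MeasurableSpace.comap (N L) inferInstance) =
        RLrest N ℓ₀ := by
      rw [RLrest]
      exact iSup_congr fun L => by simp [Set.mem_compl_singleton_iff]
    rwa [h1, h2] at h
  have h0meas : MeasurableSet[MeasurableSpace.comap (N ℓ₀) inferInstance] {ω | N ℓ₀ ω = 0} :=
    ⟨{0}, measurableSet_singleton 0, rfl⟩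
  have hPmT : Pm ({ω | N ℓ₀ ω = 0} ∩ (Ap \ Am)) =
      Pm {ω | N ℓ₀ ω = 0} * Pm (Ap \ Am) :=
    (ProbabilityTheory.Indep_iff _ _ _).mp hindep2 _ _ h0meas (hApm'.diff hAmm')
  have hN0 : Pm {ω | N ℓ₀ ω = 0} = ENNReal.ofReal (Real.exp (-(β ℓ₀ * μ0))) := by
    have := hNmarg ℓ₀ 0
    simpa using this
  have hdiff : Pm (Ap \ Am) = Pm Ap - Pm Am :=
    measure_diff hAmAp hAmm.nullMeasurableSet (measure_ne_top Pm Am)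
  have hdiffto : (Pm (Ap \ Am)).toReal = a - b := by
    rw [hdiff, ENNReal.toReal_sub_of_le (measure_mono hAmAp) (measure_ne_top _ _)]
  have hPmT' : (Pm ({ω | N ℓ₀ ω = 0} ∩ (Ap \ Am))).toReal
      = Real.exp (-(β ℓ₀ * μ0)) * (a - b) := by
    rw [hPmT, ENNReal.toReal_mul, hN0, ENNReal.toReal_ofReal (Real.exp_nonneg _), hdiffto]
  -- step 3 : identification of the probability as a function of the intensity at ℓ₀
  have hev : (fun t : ℝ => P (Function.update β ℓ₀ t)) =ᶠ[nhds (β ℓ₀)]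
      (fun t : ℝ => a - (a - b) * Real.exp (-(μ0 * t))) := by
    filter_upwards [isOpen_Ioi.mem_nhds hℓ₀] with t ht
    have htpos : (0:ℝ) < t := ht
    have hγnn : ∀ L, 0 ≤ Function.update β ℓ₀ t L := by
      intro L
      rcases eq_or_ne L ℓ₀ with rfl | hL
      · rw [Function.update_self]; exact htpos.le
      · rw [Function.update_of_ne hL]; exact hβ L
    have hupdate : (fun L => Function.update β ℓ₀ t L * L.mu) =
        Function.update (fun L => β L * L.mu) ℓ₀ (t * μ0) := by
      funext L
      rcases eq_or_ne L ℓ₀ with rfl | hL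
      · rw [Function.update_self, Function.update_self]
      · rw [Function.update_of_ne hL, Function.update_of_ne hL]
    have hproc' := RLprod_process Pm N (fun L => β L * L.mu) ⟨hNmeas, hNindep, hNmarg⟩ ℓ₀
      (t * μ0) (by positivity)
    rw [← hupdate] at hproc'
    have hPt := hP (Function.update β ℓ₀ t) hγnn (Ω × ℕ) inferInstance
      (Pm.prod (ProbabilityTheory.poissonMeasure (t * μ0).toNNReal)) inferInstance
      _ hproc'
    rw [hPt]
    set π := ProbabilityTheory.poissonMeasure (t * μ0).toNNReal with hπdef
    set N' : Loop d → Ω × ℕ → ℕ := fun L p => if L = ℓ₀ then p.2 else N L p.1 with hN'def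
    have hloops : ∀ (ω : Ω) (k : ℕ), loopsOf N' (ω, k) =
        if 0 < k then insert ℓ₀ (Sm ω) else Sm ω := by
      intro ω k
      ext L
      by_cases hk : 0 < k
      · simp only [if_pos hk, loopsOf, Set.mem_setOf_eq, hN'def, Set.mem_insert_iff,
          hSmdef, RLSm]
        rcases eq_or_ne L ℓ₀ with rfl | hL
        · simp [hk]
        · simp [hL]
      · have hk0 : k = 0 := Nat.eq_zero_of_not_pos hk
        subst hk0
        simp only [if_neg hk, loopsOf, Set.mem_setOf_eq, hN'def, hSmdef, RLSm]
        rcases eq_or_ne L ℓ₀ with rfl | hL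
        · simp
        · simp [hL]
    have hevent : {p : Ω × ℕ | (loopCluster (loopsOf N' p) 0 ∩ linfSphere d n).Nonempty} =
        (Ap ×ˢ {k : ℕ | 0 < k}) ∪ (Am ×ˢ ({0} : Set ℕ)) := by
      ext ⟨ω, k⟩
      simp only [Set.mem_setOf_eq, hloops ω k, Set.mem_union, Set.mem_prod,
        Set.mem_singleton_iff, Set.mem_setOf_eq, hApdef, hAmdef]
      by_cases hk : 0 < k
      · rw [if_pos hk]
        constructor
        · intro h; exact Or.inl ⟨h, hk⟩
        · rintro (⟨h, -⟩ | ⟨h, h0⟩)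
          · exact h
          · subst h0; exact absurd hk (lt_irrefl 0)
      · rw [if_neg hk]
        have hk0 : k = 0 := Nat.eq_zero_of_not_pos hk
        subst hk0
        constructor
        · intro h; exact Or.inr ⟨h, rfl⟩
        · rintro (⟨h, h0⟩ | ⟨h, -⟩)
          · exact absurd h0 hk
          · exact h
    rw [hevent]
    have hdisj : Disjoint (Ap ×ˢ {k : ℕ | 0 < k}) (Am ×ˢ ({0} : Set ℕ)) := by
      rw [Set.disjoint_left]
      rintro ⟨ω, k⟩ ⟨-, hk⟩ ⟨-, hk0⟩
      rw [Set.mem_singleton_iff] at hk0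
      subst hk0
      exact absurd hk (lt_irrefl 0)
    have hmeas2 : MeasurableSet (Am ×ˢ ({0} : Set ℕ)) := hAmm.prod (measurableSet_singleton 0)
    rw [measure_union hdisj hmeas2, Measure.prod_prod, Measure.prod_prod]
    have hπ0 : π {0} = ENNReal.ofReal (Real.exp (-(t * μ0))) := by
      rw [hπdef, RLpoisson_singleton, Real.coe_toNNReal _ (by positivity)]
      simp
    have hπpos : π {k : ℕ | 0 < k} = 1 - ENNReal.ofReal (Real.exp (-(t * μ0))) := by
      have hcmpl : {k : ℕ | 0 < k} = ({0} : Set ℕ)ᶜ := by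
        ext k; simp [Nat.pos_iff_ne_zero]
      rw [hcmpl, measure_compl (measurableSet_singleton 0) (measure_ne_top _ _),
        measure_univ, hπ0]
    rw [hπpos, hπ0]
    have he1 : ENNReal.ofReal (Real.exp (-(t * μ0))) ≤ 1 := by
      rw [← ENNReal.ofReal_one]
      exact ENNReal.ofReal_le_ofReal (Real.exp_le_one_iff.mpr (neg_nonpos.mpr (by positivity)))
    have hfin1 : Pm Ap * (1 - ENNReal.ofReal (Real.exp (-(t * μ0)))) ≠ ⊤ :=
      ENNReal.mul_ne_top (measure_ne_top _ _) (ne_top_of_le_ne_top ENNReal.one_ne_top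
        tsub_le_self)
    have hfin2 : Pm Am * ENNReal.ofReal (Real.exp (-(t * μ0))) ≠ ⊤ :=
      ENNReal.mul_ne_top (measure_ne_top _ _) ENNReal.ofReal_ne_top
    rw [ENNReal.toReal_add hfin1 hfin2, ENNReal.toReal_mul, ENNReal.toReal_mul,
      ENNReal.toReal_sub_of_le he1 ENNReal.one_ne_top, ENNReal.toReal_one,
      ENNReal.toReal_ofReal (Real.exp_nonneg _)]
    rw [show -(μ0 * t) = -(t * μ0) by ring]
    ring
  -- step 4 : the derivative
  have hderiv : HasDerivAt (fun t : ℝ => a - (a - b) * Real.exp (-(μ0 * t)))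
      ((a - b) * (μ0 * Real.exp (-(μ0 * β ℓ₀)))) (β ℓ₀) := by
    have h1 : HasDerivAt (fun t : ℝ => -(μ0 * t)) (-μ0) (β ℓ₀) := by
      have := ((hasDerivAt_id (β ℓ₀)).const_mul μ0).neg; simp only [mul_one] at this; exact this
    have h2 := h1.exp
    have h3 := (h2.const_mul (a - b)).const_sub a
    refine h3.congr_deriv ?_
    ring
  have hfinal := hderiv.congr_of_eventuallyEq hev
  refine hfinal.congr_deriv ?_
  rw [hTeq, hPmT', show -(μ0 * β ℓ₀) = -(β ℓ₀ * μ0) by ring]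
  ring
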